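/- Let n ≥ 3 be an integer and let p be a real number with 0 < p < 1. In the Erdős–Rényi random graph G(n,p), the probability that the minimum degree is at most np/2 is at most 2n·e^{−(n−1)p/48}. -/

import Mathlib

open MeasureTheory

/-- The simple graph on `Fin n` determined by an indicator `ω` of the (unordered) pairs:
`u` and `v` are adjacent iff `u ≠ v` and the pair `{u, v}` is switched on by `ω`. -/
def erdosRenyiGraph (n : ℕ) (ω : Sym2 (Fin n) → Bool) : SimpleGraph (Fin n) where
  Adj u v := u ≠ v ∧ ω s(u, v) = true
  symm := by
    constructor
    intro u v h
    exact ⟨h.1.symm, by rw [Sym2.eq_swap]; exact h.2⟩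
  loopless := by constructor; intro u h; exact h.1 rfl

instance (n : ℕ) (ω : Sym2 (Fin n) → Bool) : DecidableRel (erdosRenyiGraph n ω).Adj :=
  fun u v => inferInstanceAs (Decidable (u ≠ v ∧ ω s(u, v) = true))

/-- The Erdős–Rényi measure: each unordered pair is included independently with
probability `p` (a product of Bernoulli measures). -/
noncomputable def erdosRenyiMeasure (n : ℕ) (p : ℝ) (hp : p ≤ 1) :
    Measure (Sym2 (Fin n) → Bool) :=
  Measure.pi fun _ : Sym2 (Fin n) =>
    (PMF.bernoulli (Real.toNNReal p) (Real.toNNReal_le_one.mpr hp)).toMeasure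

/- ## Auxiliary development -/

def bernR (p : ℝ) (b : Bool) : ℝ := if b then p else 1 - p

noncomputable def erW (n : ℕ) (p : ℝ) (ω : Sym2 (Fin n) → Bool) : ℝ := ∏ i, bernR p (ω i)

lemma bernR_nonneg {p : ℝ} (h0 : 0 ≤ p) (h1 : p ≤ 1) (b : Bool) : 0 ≤ bernR p b := by
  cases b <;> simp [bernR] <;> linarith

lemma erW_nonneg {n : ℕ} {p : ℝ} (h0 : 0 ≤ p) (h1 : p ≤ 1) (ω : Sym2 (Fin n) → Bool) :
    0 ≤ erW n p ω :=
  Finset.prod_nonneg fun i _ => bernR_nonneg h0 h1 _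

lemma er_singleton (n : ℕ) (p : ℝ) (h0 : 0 ≤ p) (h1 : p ≤ 1) (ω : Sym2 (Fin n) → Bool) :
    erdosRenyiMeasure n p h1 {ω} = ENNReal.ofReal (erW n p ω) := by
  have hs : ({ω} : Set (Sym2 (Fin n) → Bool)) = Set.univ.pi (fun i => {ω i}) := by
    ext x
    simp [funext_iff, Set.mem_pi]
  rw [erdosRenyiMeasure, hs, Measure.pi_pi, erW,
    ENNReal.ofReal_prod_of_nonneg (fun i _ => bernR_nonneg h0 h1 _)]
  refine Finset.prod_congr rfl fun i _ => ?_
  rw [PMF.toMeasure_apply_singleton _ _ (measurableSet_singleton _), PMF.bernoulli_apply]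
  cases h : ω i
  · simp only [cond_false, bernR, if_neg Bool.false_ne_true]
    rw [ENNReal.ofReal_sub _ h0, ENNReal.ofReal_one, ENNReal.coe_sub, ENNReal.coe_one]; rfl
  · simp [bernR]; rfl

lemma er_apply (n : ℕ) (p : ℝ) (h0 : 0 ≤ p) (h1 : p ≤ 1) (S : Set (Sym2 (Fin n) → Bool)) :
    erdosRenyiMeasure n p h1 S = ENNReal.ofReal (∑ ω, S.indicator (erW n p) ω) := by
  classical
  have hS : S = ⋃ ω ∈ Finset.univ.filter (· ∈ S), ({ω} : Set (Sym2 (Fin n) → Bool)) := by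
    ext x; simp
  conv_lhs => rw [hS, measure_biUnion_finset
    (fun x _ y hy hxy => by simp [Set.disjoint_singleton, hxy])
    (fun b _ => measurableSet_singleton b)]
  have h2 : ∑ ω, S.indicator (erW n p) ω
      = ∑ ω ∈ Finset.univ.filter (· ∈ S), erW n p ω := by
    rw [Finset.sum_filter]
    exact Finset.sum_congr rfl fun ω _ => by simp [Set.indicator_apply]
  rw [h2, ENNReal.ofReal_sum_of_nonneg (fun i _ => erW_nonneg h0 h1 i)]
  exact Finset.sum_congr rfl fun ω _ => er_singleton n p h0 h1 ω

lemma sym2_injOn (n : ℕ) (v : Fin n) :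
    Set.InjOn (fun u => s(u, v)) ↑(Finset.univ.erase v) := by
  intro a ha b hb h
  simp only [Finset.coe_erase, Set.mem_diff, Set.mem_singleton_iff] at ha hb
  rcases Sym2.eq_iff.mp h with ⟨h1, _⟩ | ⟨h1, h2⟩
  · exact h1
  · exact absurd h1 ha.2

lemma degree_eq (n : ℕ) (ω : Sym2 (Fin n) → Bool) (v : Fin n) :
    (erdosRenyiGraph n ω).degree v
      = ((Finset.univ.erase v).filter (fun u => ω s(u, v) = true)).card := by
  rw [SimpleGraph.degree]
  congr 1
  ext u
  simp only [SimpleGraph.mem_neighborFinset, Finset.mem_filter, Finset.mem_erase,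
    Finset.mem_univ, and_true]
  constructor
  · rintro ⟨h1, h2⟩
    exact ⟨fun h => h1 h.symm, by rwa [Sym2.eq_swap]⟩
  · rintro ⟨h1, h2⟩
    exact ⟨fun h => h1 h.symm, by rwa [Sym2.eq_swap]⟩

lemma exp_quarter : Real.exp (-(1/4 : ℝ)) ≤ 64/81 := by
  have h1 : (9:ℝ)/8 ≤ Real.exp (1/8) := by
    have := Real.add_one_le_exp (1/8 : ℝ); linarith
  have h2 : Real.exp (-(1/8 : ℝ)) ≤ 8/9 := by
    rw [Real.exp_neg]
    rw [inv_le_comm₀ (Real.exp_pos _) (by norm_num)]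
    linarith
  have h3 : Real.exp (-(1/4 : ℝ)) = Real.exp (-(1/8:ℝ)) * Real.exp (-(1/8:ℝ)) := by
    rw [← Real.exp_add]; norm_num
  rw [h3]
  nlinarith [Real.exp_pos (-(1/8:ℝ))]

lemma vertex_bound (n : ℕ) (hn : 3 ≤ n) (p : ℝ) (hp0 : 0 < p) (hp1 : p < 1) (v : Fin n) :
    ∑ ω, ({ω | ((erdosRenyiGraph n ω).degree v : ℝ) ≤ (n:ℝ) * p / 2}).indicator (erW n p) ω
      ≤ Real.exp (-(((n:ℝ)-1)*p)/48) := by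
  classical
  set t : ℝ := -(1/4) with ht
  set a : ℝ := (n:ℝ) * p / 2 with ha
  set T : Finset (Sym2 (Fin n)) := (Finset.univ.erase v).image (fun u => s(u, v)) with hT
  set d : (Sym2 (Fin n) → Bool) → ℝ := fun ω => ((erdosRenyiGraph n ω).degree v : ℝ) with hd
  set g : Sym2 (Fin n) → Bool → ℝ :=
    fun i b => (if i ∈ T ∧ b = true then Real.exp t else 1) * bernR p b with hg
  have hWnn : ∀ ω, 0 ≤ erW n p ω := erW_nonneg hp0.le hp1.le
  -- Step A
  have stepA : ∑ ω, ({ω | d ω ≤ a}).indicator (erW n p) ω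
      ≤ ∑ ω : Sym2 (Fin n) → Bool, Real.exp (t * (d ω - a)) * erW n p ω := by
    apply Finset.sum_le_sum
    intro ω _
    by_cases h : ω ∈ {ω | d ω ≤ a}
    · rw [Set.indicator_of_mem h]
      have hda : d ω - a ≤ 0 := by simpa [sub_nonpos] using h
      have h1 : (1:ℝ) ≤ Real.exp (t * (d ω - a)) :=
        Real.one_le_exp (by rw [ht]; nlinarith)
      exact le_mul_of_one_le_left (hWnn ω) h1
    · rw [Set.indicator_of_notMem h]
      exact mul_nonneg (Real.exp_pos _).le (hWnn ω)
  -- Step B: pointwise identity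
  have hD : ∀ ω : Sym2 (Fin n) → Bool,
      d ω = ∑ u ∈ Finset.univ.erase v, (if ω s(u,v) = true then (1:ℝ) else 0) := by
    intro ω
    simp only [hd]
    rw [degree_eq, Finset.card_filter]
    push_cast
    rfl
  have stepB : ∀ ω : Sym2 (Fin n) → Bool,
      Real.exp (t * d ω) * erW n p ω = ∏ i, g i (ω i) := by
    intro ω
    have e1 : Real.exp (t * d ω)
        = ∏ u ∈ Finset.univ.erase v, (if ω s(u,v) = true then Real.exp t else 1) := by
      rw [hD, Finset.mul_sum, Real.exp_sum]
      refine Finset.prod_congr rfl fun u _ => ?_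
      by_cases h : ω s(u,v) = true <;> simp [h]
    have e2 : ∏ u ∈ Finset.univ.erase v, (if ω s(u,v) = true then Real.exp t else 1)
        = ∏ i ∈ T, (if ω i = true then Real.exp t else 1) := by
      rw [hT, Finset.prod_image (fun x hx y hy hxy => sym2_injOn n v hx hy hxy)]
    have e3 : ∏ i ∈ T, (if ω i = true then Real.exp t else 1)
        = ∏ i, (if i ∈ T then (if ω i = true then Real.exp t else 1) else 1) := by
      rw [Finset.prod_ite_mem, Finset.univ_inter]
    rw [e1, e2, e3, erW, ← Finset.prod_mul_distrib]
    refine Finset.prod_congr rfl fun i _ => ?_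
    by_cases h1 : i ∈ T <;> by_cases h2 : ω i = true <;> simp [hg, h1, h2]
  -- Step C: sum over all ω factorizes
  have stepC : ∑ ω : Sym2 (Fin n) → Bool, ∏ i, g i (ω i)
      = ∏ i, (g i true + g i false) := by
    rw [← Fintype.piFinset_univ, ← Finset.prod_univ_sum]
    exact Finset.prod_congr rfl fun i _ => by rw [Fintype.sum_bool]
  -- Step D: evaluate the product
  have hTcard : T.card = n - 1 := by
    rw [hT, Finset.card_image_of_injOn (sym2_injOn n v),
      Finset.card_erase_of_mem (Finset.mem_univ v), Finset.card_univ, Fintype.card_fin]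
  set c : ℝ := Real.exp t * p + (1 - p) with hc
  have stepD : ∏ i, (g i true + g i false) = c ^ (n - 1) := by
    have e4 : ∀ i, g i true + g i false = if i ∈ T then c else 1 := by
      intro i
      by_cases h : i ∈ T <;> simp [hg, bernR, h, hc] <;> ring
    calc ∏ i, (g i true + g i false) = ∏ i, (if i ∈ T then c else 1) :=
          Finset.prod_congr rfl fun i _ => e4 i
      _ = ∏ i ∈ T, c := by rw [Finset.prod_ite_mem, Finset.univ_inter]
      _ = c ^ (n-1) := by rw [Finset.prod_const, hTcard]
  -- Put together
  have key : ∑ ω, ({ω | d ω ≤ a}).indicator (erW n p) ω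
      ≤ Real.exp (-(t * a)) * c ^ (n - 1) := by
    refine stepA.trans (le_of_eq ?_)
    have e5 : ∀ ω : Sym2 (Fin n) → Bool, Real.exp (t * (d ω - a)) * erW n p ω
        = Real.exp (-(t*a)) * (Real.exp (t * d ω) * erW n p ω) := by
      intro ω
      rw [mul_sub, sub_eq_add_neg, Real.exp_add]
      ring
    rw [Finset.sum_congr rfl fun ω _ => e5 ω, ← Finset.mul_sum,
      Finset.sum_congr rfl fun ω _ => stepB ω, stepC, stepD]
  refine key.trans ?_
  -- Step E: real arithmetic
  have hm : (2:ℝ) ≤ (n:ℝ) - 1 := by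
    have : (3:ℝ) ≤ (n:ℝ) := by exact_mod_cast hn
    linarith
  have hmc : ((n - 1 : ℕ) : ℝ) = (n:ℝ) - 1 := by
    have : 1 ≤ n := by omega
    push_cast [this]
    ring
  have hc0 : 0 ≤ c := by
    have := Real.exp_pos t
    nlinarith
  have hcle : c ≤ Real.exp (p * (Real.exp t - 1)) := by
    have := Real.add_one_le_exp (p * (Real.exp t - 1))
    nlinarith
  have hpow : c ^ (n-1) ≤ Real.exp (((n:ℝ)-1) * (p * (Real.exp t - 1))) := by
    calc c ^ (n-1) ≤ Real.exp (p * (Real.exp t - 1)) ^ (n-1) :=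
          pow_le_pow_left₀ hc0 hcle _
      _ = Real.exp (((n-1:ℕ):ℝ) * (p * (Real.exp t - 1))) := (Real.exp_nat_mul _ _).symm
      _ = _ := by rw [hmc]
  calc Real.exp (-(t * a)) * c ^ (n-1)
      ≤ Real.exp (-(t * a)) * Real.exp (((n:ℝ)-1) * (p * (Real.exp t - 1))) := by
        exact mul_le_mul_of_nonneg_left hpow (Real.exp_pos _).le
    _ = Real.exp (-(t * a) + ((n:ℝ)-1) * (p * (Real.exp t - 1))) := (Real.exp_add _ _).symm
    _ ≤ Real.exp (-(((n:ℝ)-1)*p)/48) := by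
        apply Real.exp_le_exp.mpr
        have hexp : Real.exp t ≤ 64/81 := by rw [ht]; exact exp_quarter
        have hexp0 : 0 < Real.exp t := Real.exp_pos t
        have h1 : 0 ≤ p * ((n:ℝ) - 3) := by nlinarith
        have h2 : 0 ≤ (64/81 - Real.exp t) * (((n:ℝ)-1) * p) := by nlinarith
        rw [ht, ha]
        nlinarith

/-- For `n ≥ 3` and `0 < p < 1`, in the random graph `G(n,p)` the
probability that the minimum degree is at most `np/2` is at most `2n·e^{−(n−1)p/48}`. -/
theorem erdosRenyi_minDegree_prob (n : ℕ) (hn : 3 ≤ n) (p : ℝ)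
    (hp0 : 0 < p) (hp1 : p < 1) :
    erdosRenyiMeasure n p hp1.le
        {ω | ((erdosRenyiGraph n ω).minDegree : ℝ) ≤ (n : ℝ) * p / 2} ≤
      ENNReal.ofReal (2 * (n : ℝ) * Real.exp (-(((n : ℝ) - 1) * p) / 48)) := by
  classical
  have hnn : Nonempty (Fin n) := ⟨⟨0, by omega⟩⟩
  set E : Fin n → Set (Sym2 (Fin n) → Bool) :=
    fun v => {ω | ((erdosRenyiGraph n ω).degree v : ℝ) ≤ (n:ℝ) * p / 2} with hE
  have hsub : {ω | ((erdosRenyiGraph n ω).minDegree : ℝ) ≤ (n : ℝ) * p / 2} ⊆ ⋃ v, E v := by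
    intro ω hω
    obtain ⟨v, hv⟩ := (erdosRenyiGraph n ω).exists_minimal_degree_vertex
    refine Set.mem_iUnion.mpr ⟨v, ?_⟩
    simp only [hE, Set.mem_setOf_eq]
    rw [← hv]
    exact hω
  have hexpnn : (0:ℝ) ≤ Real.exp (-(((n:ℝ)-1)*p)/48) := (Real.exp_pos _).le
  calc erdosRenyiMeasure n p hp1.le
        {ω | ((erdosRenyiGraph n ω).minDegree : ℝ) ≤ (n : ℝ) * p / 2}
      ≤ erdosRenyiMeasure n p hp1.le (⋃ v, E v) := measure_mono hsub
    _ ≤ ∑' v, erdosRenyiMeasure n p hp1.le (E v) := measure_iUnion_le E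
    _ = ∑ v, erdosRenyiMeasure n p hp1.le (E v) := tsum_fintype _
    _ ≤ ∑ _v : Fin n, ENNReal.ofReal (Real.exp (-(((n:ℝ)-1)*p)/48)) := by
        refine Finset.sum_le_sum fun v _ => ?_
        rw [er_apply n p hp0.le hp1.le]
        exact ENNReal.ofReal_le_ofReal (vertex_bound n hn p hp0 hp1 v)
    _ = (n : ENNReal) * ENNReal.ofReal (Real.exp (-(((n:ℝ)-1)*p)/48)) := by
        rw [Finset.sum_const, Finset.card_univ, Fintype.card_fin, nsmul_eq_mul]
    _ = ENNReal.ofReal ((n:ℝ) * Real.exp (-(((n:ℝ)-1)*p)/48)) := by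
        rw [ENNReal.ofReal_mul (by positivity), ENNReal.ofReal_natCast]
    _ ≤ ENNReal.ofReal (2 * (n : ℝ) * Real.exp (-(((n : ℝ) - 1) * p) / 48)) := by
        apply ENNReal.ofReal_le_ofReal
        nlinarith [hexpnn, Nat.cast_nonneg (α := ℝ) n]
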